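/- Let Δ ⊂ ℝ^n be the relative interior of a d-dimensional lattice simplex with vertices v_1, …, v_{d+1}, let a_i = (v_i, 1) ∈ ℤ^{n+1}, and let C = cone_ℝ(a_1, …, a_{d+1}). Then for any d' ≥ d and all integers i with 0 ≤ i ≤ d', the f*-coefficient f*_i of the Ehrhart polynomial L_Δ (with respect to degree d') equals the number of atomic lattice points in the half-open fundamental simplex of C at level i+1. In particular f*_i = 0 for i > d. -/

import Mathlib

open Polynomial

/-- The polynomial `binomial (k-1) i` in the variable `k`. -/
noncomputable def binomDesc (i : ℕ) : Polynomial ℚ :=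
  C ((i.factorial : ℚ)⁻¹) * ∏ j ∈ Finset.range i, (X - C ((j : ℚ) + 1))

open Finset

namespace FstarAux


/-- lattice condition -/
def IsLat {d n : ℕ} (v : Fin (d + 1) → Fin n → ℤ) (lam : Fin (d + 1) → ℝ) : Prop :=
  ∀ j : Fin n, ∃ c : ℤ, (c : ℝ) = ∑ t, lam t * (v t j : ℝ)

def Lam {d n : ℕ} (v : Fin (d + 1) → Fin n → ℤ) (k : ℕ) : Set (Fin (d + 1) → ℝ) :=
  {lam | (∀ t, 0 < lam t) ∧ (∑ t, lam t) = (k : ℝ) ∧ IsLat v lam}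

def Atom {d n : ℕ} (v : Fin (d + 1) → Fin n → ℤ) (ℓ : ℕ) : Set (Fin (d + 1) → ℝ) :=
  {lam | (∀ t, 0 < lam t) ∧ (∑ t, lam t) = (ℓ : ℝ) ∧
    (∀ j : Fin (d + 1), (j : ℕ) + 1 < ℓ → lam j ≤ 1) ∧ IsLat v lam}

def Mset (d k ℓ : ℕ) : Set (Fin (d + 1) → ℕ) :=
  {m | (∀ t : Fin (d + 1), ℓ ≤ (t : ℕ) → m t = 0) ∧ (∑ t, m t) + ℓ = k}

/-- uniqueness of barycentric-type coordinates -/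
theorem lam_unique {d n : ℕ} {v : Fin (d + 1) → Fin n → ℤ}
    (hv : AffineIndependent ℝ fun i => fun j => ((v i j : ℝ)))
    {lam lam' : Fin (d + 1) → ℝ} (hs : ∑ t, lam t = ∑ t, lam' t)
    (h : ∀ j : Fin n, ∑ t, lam t * (v t j : ℝ) = ∑ t, lam' t * (v t j : ℝ)) :
    lam = lam' := by
  funext t
  refine hv.eq_of_sum_eq_sum hs ?_ t (Finset.mem_univ t)
  funext j
  simpa [Finset.sum_apply] using h j



theorem atom_level_le {d : ℕ} {mu : Fin (d + 1) → ℝ} {ℓ : ℕ}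
    (hmu : ∀ t, 0 < mu t) (hmusum : ∑ t, mu t = (ℓ : ℝ))
    (hmuat : ∀ j : Fin (d + 1), (j : ℕ) + 1 < ℓ → mu j ≤ 1) : ℓ ≤ d + 1 := by
  by_contra hcon
  push_neg at hcon
  have h1 : ∀ t : Fin (d + 1), mu t ≤ 1 := fun t => hmuat t (by omega)
  have h2 : ∑ t, mu t ≤ (d + 1 : ℝ) := by
    calc ∑ t, mu t ≤ ∑ _t : Fin (d + 1), (1 : ℝ) := Finset.sum_le_sum fun t _ => h1 t
    _ = (d + 1 : ℝ) := by simp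
  rw [hmusum] at h2
  have : (ℓ : ℝ) < (ℓ : ℝ) := lt_of_le_of_lt h2 (by exact_mod_cast hcon)
  exact lt_irrefl _ this

theorem decomp_level_absurd {d : ℕ} {mu mu' : Fin (d + 1) → ℝ} {m m' : Fin (d + 1) → ℕ}
    {ℓ ℓ' : ℕ}
    (hmu : ∀ t, 0 < mu t) (hmusum : ∑ t, mu t = (ℓ : ℝ))
    (hm : ∀ t : Fin (d + 1), ℓ ≤ (t : ℕ) → m t = 0)
    (hmu' : ∀ t, 0 < mu' t) (hmusum' : ∑ t, mu' t = (ℓ' : ℝ))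
    (hmuat' : ∀ j : Fin (d + 1), (j : ℕ) + 1 < ℓ' → mu' j ≤ 1)
    (heq : ∀ t, mu t + (m t : ℝ) = mu' t + (m' t : ℝ))
    (hlt : ℓ < ℓ') : False := by
  -- pointwise m t ≤ m' t
  have hpt : ∀ t : Fin (d + 1), m t ≤ m' t := by
    intro t
    by_cases ht : ℓ ≤ (t : ℕ)
    · simp [hm t ht]
    · push_neg at ht
      have hat : mu' t ≤ 1 := hmuat' t (by omega)
      have : (m t : ℝ) < (m' t : ℝ) + 1 := by
        have h1 := heq t
        have h2 := hmu t
        linarith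
      have : m t < m' t + 1 := by exact_mod_cast this
      omega
  have hsum : (ℓ : ℝ) + ∑ t, (m t : ℝ) = (ℓ' : ℝ) + ∑ t, (m' t : ℝ) := by
    have h1 : ∑ t, (mu t + (m t : ℝ)) = ∑ t, (mu' t + (m' t : ℝ)) :=
      Finset.sum_congr rfl fun t _ => heq t
    rw [Finset.sum_add_distrib, Finset.sum_add_distrib, hmusum, hmusum'] at h1
    linarith
  have hle : ∑ t, (m t : ℝ) ≤ ∑ t, (m' t : ℝ) :=
    Finset.sum_le_sum fun t _ => by exact_mod_cast hpt t
  have : (ℓ : ℝ) < (ℓ' : ℝ) := by exact_mod_cast hlt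
  linarith

theorem decomp_unique {d : ℕ} {mu mu' : Fin (d + 1) → ℝ} {m m' : Fin (d + 1) → ℕ}
    {ℓ ℓ' : ℕ} (hℓ : 1 ≤ ℓ)
    (hmu : ∀ t, 0 < mu t) (hmusum : ∑ t, mu t = (ℓ : ℝ))
    (hmuat : ∀ j : Fin (d + 1), (j : ℕ) + 1 < ℓ → mu j ≤ 1)
    (hm : ∀ t : Fin (d + 1), ℓ ≤ (t : ℕ) → m t = 0)
    (hmu' : ∀ t, 0 < mu' t) (hmusum' : ∑ t, mu' t = (ℓ' : ℝ))
    (hmuat' : ∀ j : Fin (d + 1), (j : ℕ) + 1 < ℓ' → mu' j ≤ 1)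
    (hm' : ∀ t : Fin (d + 1), ℓ' ≤ (t : ℕ) → m' t = 0)
    (heq : ∀ t, mu t + (m t : ℝ) = mu' t + (m' t : ℝ)) :
    ℓ = ℓ' ∧ mu = mu' ∧ m = m' := by
  have hll : ℓ = ℓ' := by
    rcases lt_trichotomy ℓ ℓ' with h | h | h
    · exact absurd h (fun h => decomp_level_absurd hmu hmusum hm hmu' hmusum' hmuat' heq h)
    · exact h
    · exact absurd h (fun h =>
        decomp_level_absurd hmu' hmusum' hm' hmu hmusum hmuat (fun t => (heq t).symm) h)
  subst hll
  have hld : ℓ ≤ d + 1 := atom_level_le hmu hmusum hmuat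
  -- m agrees away from index ℓ - 1
  have hne : ∀ t : Fin (d + 1), (t : ℕ) ≠ ℓ - 1 → m t = m' t := by
    intro t ht
    by_cases h1 : ℓ ≤ (t : ℕ)
    · rw [hm t h1, hm' t h1]
    · push_neg at h1
      have h2 : (t : ℕ) + 1 < ℓ := by omega
      have ha := hmuat t h2
      have ha' := hmuat' t h2
      have hb := hmu t
      have hb' := hmu' t
      have he := heq t
      have c1 : (m t : ℝ) < (m' t : ℝ) + 1 := by linarith
      have c2 : (m' t : ℝ) < (m t : ℝ) + 1 := by linarith
      have c1' : m t < m' t + 1 := by exact_mod_cast c1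
      have c2' : m' t < m t + 1 := by exact_mod_cast c2
      omega
  -- sums of m and m' agree
  have hsum : ∑ t, m t = ∑ t, m' t := by
    have h1 : ∑ t, (mu t + (m t : ℝ)) = ∑ t, (mu' t + (m' t : ℝ)) :=
      Finset.sum_congr rfl fun t _ => heq t
    rw [Finset.sum_add_distrib, Finset.sum_add_distrib, hmusum, hmusum'] at h1
    have h2 : ∑ t, (m t : ℝ) = ∑ t, (m' t : ℝ) := by linarith
    exact_mod_cast h2
  have hmm : m = m' := by
    funext t
    by_cases ht : (t : ℕ) = ℓ - 1
    · -- use the sum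
      obtain ⟨t0, ht0v⟩ : ∃ t0 : Fin (d + 1), (t0 : ℕ) = ℓ - 1 :=
        ⟨⟨ℓ - 1, by omega⟩, rfl⟩
      have htt : t = t0 := Fin.ext (by rw [ht, ht0v])
      rw [htt]
      have e1 : ∑ t ∈ Finset.univ.erase t0, m t = ∑ t ∈ Finset.univ.erase t0, m' t := by
        apply Finset.sum_congr rfl
        intro x hx
        exact hne x (by
          have hxx := Finset.ne_of_mem_erase hx
          intro hc
          exact hxx (Fin.ext (by rw [hc, ht0v])))
      have e2 := Finset.add_sum_erase Finset.univ m (Finset.mem_univ t0)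
      have e3 := Finset.add_sum_erase Finset.univ m' (Finset.mem_univ t0)
      omega
    · exact hne t ht
  subst hmm
  refine ⟨rfl, ?_, rfl⟩
  funext t
  have := heq t
  linarith



theorem toNat_cast_real (a : ℤ) (h : 0 ≤ a) : ((a.toNat : ℕ) : ℝ) = (a : ℝ) := by
  exact_mod_cast Int.toNat_of_nonneg h

theorem decomp_exists {d k : ℕ} (hk : 1 ≤ k) (lam : Fin (d + 1) → ℝ)
    (hpos : ∀ t, 0 < lam t) (hsum : ∑ t, lam t = (k : ℝ)) :
    ∃ ℓ : ℕ, 1 ≤ ℓ ∧ ℓ ≤ d + 1 ∧ ∃ (mu : Fin (d + 1) → ℝ) (m : Fin (d + 1) → ℕ),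
      (∀ t, 0 < mu t) ∧ (∑ t, mu t = (ℓ : ℝ)) ∧
      (∀ j : Fin (d + 1), (j : ℕ) + 1 < ℓ → mu j ≤ 1) ∧
      (∀ t : Fin (d + 1), ℓ ≤ (t : ℕ) → m t = 0) ∧
      (∀ t, lam t = mu t + (m t : ℝ)) := by
  classical
  set lamE : ℕ → ℝ := fun t => if h : t < d + 1 then lam ⟨t, h⟩ else 1 with hlamE
  have hlamE_pos : ∀ t, 0 < lamE t := by
    intro t
    by_cases h : t < d + 1
    · simp only [hlamE, dif_pos h]; exact hpos _
    · simp only [hlamE, dif_neg h]; exact one_pos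
  have hlamE_eq : ∀ t : Fin (d + 1), lamE (t : ℕ) = lam t := by
    intro t; simp only [hlamE, dif_pos t.isLt, Fin.eta]
  have hceil : ∀ t, 1 ≤ ⌈lamE t⌉ := fun t => Int.ceil_pos.mpr (hlamE_pos t)
  set G : ℤ → ℤ := fun _ => 0 with hGdummy
  clear hGdummy G
  set G : ℕ → ℤ := fun ℓ => (k : ℤ) - ℓ - ∑ t ∈ Finset.range (ℓ - 1), (⌈lamE t⌉ - 1) with hG
  have hsumE : ∑ t ∈ Finset.range (d + 1), lamE t = (k : ℝ) := by
    rw [← hsum, ← Fin.sum_univ_eq_sum_range]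
    exact Finset.sum_congr rfl fun t _ => hlamE_eq t
  have hP1 : 0 ≤ G 1 := by
    simp only [hG]
    simp
    exact_mod_cast hk
  set L : ℕ := Nat.findGreatest (fun ℓ => 0 ≤ G ℓ) (d + 1) with hL
  have hL1 : 1 ≤ L := by
    rw [hL]; exact Nat.le_findGreatest (P := fun ℓ => 0 ≤ G ℓ) (Nat.succ_le_succ (Nat.zero_le d)) hP1
  have hLd : L ≤ d + 1 := by rw [hL]; exact Nat.findGreatest_le (P := fun ℓ => 0 ≤ G ℓ) (d + 1)
  have hGL : 0 ≤ G L := by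
    rw [hL]; exact Nat.findGreatest_spec (P := fun ℓ => 0 ≤ G ℓ) (m := 1) (Nat.succ_le_succ (Nat.zero_le d)) hP1
  -- step relation
  have hstep : G (L + 1) = G L - ⌈lamE (L - 1)⌉ := by
    have h1 : L - 1 + 1 = L := by omega
    simp only [hG, Nat.add_sub_cancel]
    rw [← h1, Finset.sum_range_succ, h1]
    push_cast
    ring
  have hGL1 : G (L + 1) < 0 := by
    by_cases h : L + 1 ≤ d + 1
    · have := Nat.findGreatest_is_greatest (P := fun ℓ => 0 ≤ G ℓ) (lt_add_one L) h
      omega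
    · have hLe : L = d + 1 := by omega
      -- G (d + 2) < 0
      have hsc : (k : ℤ) ≤ ∑ t ∈ Finset.range (d + 1), ⌈lamE t⌉ := by
        have hr : (k : ℝ) ≤ ((∑ t ∈ Finset.range (d + 1), ⌈lamE t⌉ : ℤ) : ℝ) := by
          push_cast
          rw [← hsumE]
          exact Finset.sum_le_sum fun t _ => Int.le_ceil _
        exact_mod_cast hr
      have hsub : ∑ t ∈ Finset.range (d + 1), ((⌈lamE t⌉ : ℤ) - 1)
          = (∑ t ∈ Finset.range (d + 1), ⌈lamE t⌉) - (d + 1) := by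
        rw [Finset.sum_sub_distrib]
        simp
      simp only [hG, hLe]
      have : (d + 1 + 1 - 1) = d + 1 := by omega
      rw [this, hsub]
      omega
  have hGlt : G L < ⌈lamE (L - 1)⌉ := by omega
  -- the decomposition
  set me : ℕ → ℕ := fun t =>
    if t < L - 1 then (⌈lamE t⌉ - 1).toNat else if t = L - 1 then (G L).toNat else 0 with hme
  refine ⟨L, hL1, hLd, fun t => lam t - (me (t : ℕ) : ℝ), fun t => me (t : ℕ), ?_, ?_, ?_, ?_, ?_⟩
  · -- positivity
    intro t
    show 0 < lam t - (me ((t : Fin (d+1)) : ℕ) : ℝ)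
    rcases lt_trichotomy ((t : ℕ)) (L - 1) with h | h | h
    · have : me (t : ℕ) = (⌈lamE (t : ℕ)⌉ - 1).toNat := by simp [hme, h]
      rw [this]
      have h2 : ((⌈lamE (t : ℕ)⌉ - 1).toNat : ℝ) = (⌈lamE (t : ℕ)⌉ : ℝ) - 1 := by
        have h0 := hceil (t : ℕ)
        rw [toNat_cast_real _ (by omega)]
        push_cast; ring
      rw [h2, hlamE_eq t] at *
      have h3 : (⌈lam t⌉ : ℝ) < lam t + 1 := Int.ceil_lt_add_one _
      rw [← hlamE_eq t] at h3 ⊢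
      linarith
    · have hmt : me (t : ℕ) = (G L).toNat := by simp [hme, h]
      rw [hmt]
      have h2 : ((G L).toNat : ℝ) = ((G L : ℤ) : ℝ) := toNat_cast_real _ hGL
      rw [h2]
      have h3 : ((G L : ℤ) : ℝ) < lamE (L - 1) := by
        have hc : (G L : ℤ) ≤ ⌈lamE (L - 1)⌉ - 1 := by omega
        have hc2 : ((⌈lamE (L - 1)⌉ : ℤ) : ℝ) < lamE (L - 1) + 1 := Int.ceil_lt_add_one _
        have : ((G L : ℤ) : ℝ) ≤ ((⌈lamE (L - 1)⌉ : ℤ) : ℝ) - 1 := by exact_mod_cast hc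
        linarith
      rw [← h, hlamE_eq t] at h3
      linarith
    · have hmt : me (t : ℕ) = 0 := by
        simp only [hme]
        rw [if_neg (by omega), if_neg (by omega)]
      rw [hmt]
      simpa using hpos t
  · -- sum
    have hcast : ∀ t ∈ Finset.range (L - 1), ((me t : ℕ) : ℤ) = ⌈lamE t⌉ - 1 := by
      intro t ht
      rw [Finset.mem_range] at ht
      simp only [hme, if_pos ht]
      rw [Int.toNat_of_nonneg (by have := hceil t; omega)]
    have hsupp : ∀ t, L ≤ t → me t = 0 := by
      intro t ht
      simp only [hme]
      rw [if_neg (by omega), if_neg (by omega)]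
    have hsum1 : ∑ t ∈ Finset.range (d + 1), (me t : ℤ) = (k : ℤ) - L := by
      have e1 : ∑ t ∈ Finset.range (d + 1), (me t : ℤ) = ∑ t ∈ Finset.range L, (me t : ℤ) := by
        symm
        apply Finset.sum_subset (Finset.range_subset_range.mpr hLd)
        intro x _ hx
        rw [Finset.mem_range, not_lt] at hx
        rw [hsupp x hx]
        simp
      have h1 : L - 1 + 1 = L := by omega
      rw [e1, ← h1, Finset.sum_range_succ, Finset.sum_congr rfl hcast]
      have hmL : (me (L - 1) : ℤ) = G L := by
        simp only [hme]
        rw [if_neg (by omega)]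
        simp [Int.toNat_of_nonneg hGL]
      rw [hmL]
      simp only [hG]
      rw [h1]
      ring
    have hsum2 : ∑ t, ((me ((t : Fin (d + 1)) : ℕ) : ℕ) : ℝ) = ((k : ℝ) - L) := by
      have := Fin.sum_univ_eq_sum_range (fun t => ((me t : ℕ) : ℝ)) (d + 1)
      rw [this]
      have : ((∑ t ∈ Finset.range (d + 1), (me t : ℤ) : ℤ) : ℝ) = (k : ℝ) - L := by
        rw [hsum1]; push_cast; ring
      rw [← this]
      push_cast
      rfl
    show ∑ t : Fin (d + 1), (lam t - (me ((t : Fin (d+1)) : ℕ) : ℝ)) = (L : ℝ)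
    rw [Finset.sum_sub_distrib, hsum, hsum2]
    ring
  · -- atomicity
    intro j hj
    show lam j - (me ((j : Fin (d+1)) : ℕ) : ℝ) ≤ 1
    have h : (j : ℕ) < L - 1 := by omega
    have : me (j : ℕ) = (⌈lamE (j : ℕ)⌉ - 1).toNat := by simp [hme, h]
    rw [this]
    have h2 : ((⌈lamE (j : ℕ)⌉ - 1).toNat : ℝ) = (⌈lamE (j : ℕ)⌉ : ℝ) - 1 := by
      have h0 := hceil (j : ℕ)
      rw [toNat_cast_real _ (by omega)]
      push_cast; ring
    rw [h2]
    have h3 : lamE (j : ℕ) ≤ (⌈lamE (j : ℕ)⌉ : ℝ) := Int.le_ceil _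
    have h4 := hlamE_eq j
    linarith
  · -- support
    intro t ht
    show me ((t : Fin (d+1)) : ℕ) = 0
    simp only [hme]
    rw [if_neg (by omega), if_neg (by omega)]
  · intro t
    show lam t = lam t - (me ((t : Fin (d+1)) : ℕ) : ℝ) + (me ((t : Fin (d+1)) : ℕ) : ℝ)
    ring


theorem card_sum_eq (ℓ s : ℕ) :
    Nat.card {g : Fin ℓ → ℕ // ∑ t, g t = s} = (ℓ + s - 1).choose s := by
  classical
  have e : {g : Fin ℓ → ℕ // ∑ t, g t = s} ≃
      {g // g ∈ Finset.piAntidiag (Finset.univ : Finset (Fin ℓ)) s} :=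
    Equiv.subtypeEquivRight (fun g => by simp [Finset.mem_piAntidiag])
  rw [Nat.card_congr e, Nat.card_eq_fintype_card, Fintype.card_coe]
  rw [← Finset.map_sym_eq_piAntidiag, Finset.card_map, Finset.sym_univ, Finset.card_univ,
    Sym.card_sym_eq_choose, Fintype.card_fin]

theorem sum_restrict {d ℓ : ℕ} (hld : ℓ ≤ d + 1) (m : Fin (d + 1) → ℕ)
    (hsupp : ∀ t : Fin (d + 1), ℓ ≤ (t : ℕ) → m t = 0) :
    ∑ t : Fin ℓ, m (Fin.castLE hld t) = ∑ t, m t := by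
  classical
  set mE : ℕ → ℕ := fun t => if h : t < d + 1 then m ⟨t, h⟩ else 0 with hmE
  have h1 : ∑ t : Fin (d + 1), m t = ∑ t ∈ Finset.range (d + 1), mE t := by
    rw [← Fin.sum_univ_eq_sum_range mE (d + 1)]
    exact Finset.sum_congr rfl fun t _ => by simp only [hmE, dif_pos t.isLt, Fin.eta]
  have h2 : ∑ t : Fin ℓ, m (Fin.castLE hld t) = ∑ t ∈ Finset.range ℓ, mE t := by
    rw [← Fin.sum_univ_eq_sum_range mE ℓ]
    refine Finset.sum_congr rfl fun t _ => ?_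
    have ht : (t : ℕ) < d + 1 := lt_of_lt_of_le t.isLt hld
    simp only [hmE, dif_pos ht]
    rfl
  have h3 : ∑ t ∈ Finset.range (d + 1), mE t = ∑ t ∈ Finset.range ℓ, mE t := by
    symm
    apply Finset.sum_subset (Finset.range_subset_range.mpr hld)
    intro x hx1 hx2
    rw [Finset.mem_range] at hx1 hx2
    simp only [hmE]
    rw [dif_pos hx1]
    exact hsupp ⟨x, hx1⟩ (by simp only [Fin.val_mk]; omega)
  rw [h1, h2, h3]

/-- restriction equivalence for `Mset` -/
noncomputable def msetEquiv (d k ℓ : ℕ) (hld : ℓ ≤ d + 1) (hlk : ℓ ≤ k) :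
    ↥(Mset d k ℓ) ≃ {g : Fin ℓ → ℕ // ∑ t, g t = k - ℓ} where
  toFun m := ⟨fun t => m.1 (Fin.castLE hld t), by
    obtain ⟨m, hsupp, hsum⟩ := m
    rw [sum_restrict hld m hsupp]
    omega⟩
  invFun g := ⟨fun t => if h : (t : ℕ) < ℓ then g.1 ⟨(t : ℕ), h⟩ else 0, by
    constructor
    · intro t ht
      show (if h : (t : ℕ) < ℓ then g.1 ⟨(t : ℕ), h⟩ else 0) = 0
      rw [dif_neg (by omega)]
    · have hsupp : ∀ t : Fin (d + 1), ℓ ≤ (t : ℕ) →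
          (if h : (t : ℕ) < ℓ then g.1 ⟨(t : ℕ), h⟩ else 0) = 0 := by
        intro t ht; rw [dif_neg (by omega)]
      rw [← sum_restrict hld _ hsupp]
      have : ∀ t : Fin ℓ,
          (if h : ((Fin.castLE hld t : Fin (d + 1)) : ℕ) < ℓ then g.1 ⟨_, h⟩ else 0) = g.1 t := by
        intro t
        rw [dif_pos (by simpa using t.isLt)]
        exact congrArg g.1 (Fin.ext rfl)
      rw [Finset.sum_congr rfl fun t _ => this t, g.2]
      omega⟩
  left_inv := by
    rintro ⟨m, hsupp, hsum⟩
    apply Subtype.ext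
    funext t
    by_cases h : (t : ℕ) < ℓ
    · simp only [dif_pos h]
      congr 1
    · simp only [dif_neg h]
      exact (hsupp t (by omega)).symm
  right_inv := by
    rintro ⟨g, hg⟩
    apply Subtype.ext
    funext t
    simp only
    rw [dif_pos (by simpa using t.isLt)]
    exact congrArg g (Fin.ext rfl)

theorem finite_Mset (d k ℓ : ℕ) (hℓ : 1 ≤ ℓ) : (Mset d k ℓ).Finite := by
  apply Set.Finite.subset (Set.finite_Icc (fun _ : Fin (d + 1) => 0) (fun _ => k))
  rintro m ⟨hsupp, hsum⟩
  constructor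
  · intro t; exact Nat.zero_le _
  · intro t
    calc m t ≤ ∑ t, m t := Finset.single_le_sum (fun _ _ => Nat.zero_le _) (Finset.mem_univ t)
    _ ≤ k := by omega

theorem card_Mset (d k ℓ : ℕ) (hℓ : 1 ≤ ℓ) (hld : ℓ ≤ d + 1) (hk : 1 ≤ k) :
    Nat.card ↥(Mset d k ℓ) = (k - 1).choose (ℓ - 1) := by
  by_cases hlk : ℓ ≤ k
  · rw [Nat.card_congr (msetEquiv d k ℓ hld hlk), card_sum_eq]
    have h1 : ℓ + (k - ℓ) - 1 = k - 1 := by omega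
    have h2 : (k - 1) - (k - ℓ) = ℓ - 1 := by omega
    rw [h1, ← h2, Nat.choose_symm (by omega)]
  · have hempty : Mset d k ℓ = ∅ := by
      ext m
      simp only [Mset, Set.mem_setOf_eq, Set.mem_empty_iff_false, iff_false, not_and]
      intro _
      omega
    rw [hempty]
    simp [Nat.choose_eq_zero_of_lt (by omega : k - 1 < ℓ - 1)]

theorem finite_Atom {d n : ℕ} (v : Fin (d + 1) → Fin n → ℤ)
    (hv : AffineIndependent ℝ fun i => fun j => ((v i j : ℝ))) (ℓ : ℕ) :
    (Atom v ℓ).Finite := by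
  classical
  set B : Fin n → ℤ := fun j => (ℓ : ℤ) * ∑ t, |v t j| with hB
  have key : ∀ mu ∈ Atom v ℓ, ∃ c : Fin n → ℤ,
      (∀ j, (c j : ℝ) = ∑ t, mu t * (v t j : ℝ)) ∧ -B ≤ c ∧ c ≤ B := by
    rintro mu ⟨hpos, hsum, hat, hlat⟩
    choose c hc using hlat
    have habs : ∀ j, |c j| ≤ B j := by
      intro j
      have h1 : |(c j : ℝ)| ≤ (ℓ : ℝ) * ∑ t, |(v t j : ℝ)| := by
        rw [hc j]
        calc |∑ t, mu t * (v t j : ℝ)| ≤ ∑ t, |mu t * (v t j : ℝ)| :=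
              Finset.abs_sum_le_sum_abs _ _
        _ = ∑ t, mu t * |(v t j : ℝ)| := by
            refine Finset.sum_congr rfl fun t _ => ?_
            rw [abs_mul, abs_of_pos (hpos t)]
        _ ≤ ∑ t, (ℓ : ℝ) * |(v t j : ℝ)| := by
            refine Finset.sum_le_sum fun t _ => ?_
            refine mul_le_mul_of_nonneg_right ?_ (abs_nonneg _)
            calc mu t ≤ ∑ t, mu t :=
                  Finset.single_le_sum (fun t _ => le_of_lt (hpos t)) (Finset.mem_univ t)
            _ = (ℓ : ℝ) := hsum
        _ = (ℓ : ℝ) * ∑ t, |(v t j : ℝ)| := by rw [Finset.mul_sum]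
      rw [hB]
      exact_mod_cast h1
    exact ⟨c, hc, fun j => neg_le_of_abs_le (habs j), fun j => le_of_abs_le (habs j)⟩
  choose F hc hlb hub using key
  have hfin : Finite ↥(Set.Icc (-B) B) := (Set.finite_Icc _ _).to_subtype
  set φ : ↥(Atom v ℓ) → ↥(Set.Icc (-B) B) :=
    fun mu => ⟨F mu.1 mu.2, Set.mem_Icc.mpr ⟨hlb mu.1 mu.2, hub mu.1 mu.2⟩⟩ with hφ
  have hinj : Function.Injective φ := by
    rintro ⟨mu, hmu⟩ ⟨mu', hmu'⟩ hF
    have hFeq : F mu hmu = F mu' hmu' := congrArg Subtype.val hF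
    apply Subtype.ext
    apply lam_unique hv
    · rw [hmu.2.1, hmu'.2.1]
    · intro j
      rw [← hc mu hmu j, ← hc mu' hmu' j, hFeq]
  have : Finite ↥(Atom v ℓ) := Finite.of_injective φ hinj
  exact Set.finite_coe_iff.mp this

theorem nat_card_sigma {ι : Type*} [Fintype ι] (f : ι → Type*) [hf : ∀ i, Finite (f i)] :
    Nat.card (Σ i, f i) = ∑ i, Nat.card (f i) := by
  letI : ∀ i, Fintype (f i) := fun i => Fintype.ofFinite _
  rw [Nat.card_eq_fintype_card, Fintype.card_sigma]
  exact Finset.sum_congr rfl fun i _ => (Nat.card_eq_fintype_card).symm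

theorem card_Lam {d n : ℕ} (v : Fin (d + 1) → Fin n → ℤ)
    (hv : AffineIndependent ℝ fun i => fun j => ((v i j : ℝ))) (k : ℕ) (hk : 1 ≤ k) :
    Nat.card ↥(Lam v k) =
      ∑ i ∈ Finset.range (d + 1), Nat.card ↥(Atom v (i + 1)) * (k - 1).choose i := by
  classical
  set F : (Σ i : Fin (d + 1), ↥(Atom v ((i : ℕ) + 1)) × ↥(Mset d k ((i : ℕ) + 1))) →
      ↥(Lam v k) := fun p =>
    ⟨fun t => p.2.1.1 t + (p.2.2.1 t : ℝ), by
      obtain ⟨i, ⟨mu, hpos, hsum, hat, hlat⟩, ⟨m, hsupp, hmsum⟩⟩ := p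
      show (fun t => mu t + (m t : ℝ)) ∈ Lam v k
      refine ⟨fun t => ?_, ?_, ?_⟩
      · show 0 < mu t + (m t : ℝ)
        have := hpos t
        have h0 : (0 : ℝ) ≤ (m t : ℝ) := Nat.cast_nonneg _
        linarith
      · show ∑ t, (mu t + (m t : ℝ)) = (k : ℝ)
        rw [Finset.sum_add_distrib, hsum]
        have h2 : ∑ t, (m t : ℝ) = ((∑ t, m t : ℕ) : ℝ) := by push_cast; rfl
        rw [h2]
        have h3 : (((∑ t, m t) + ((i : ℕ) + 1) : ℕ) : ℝ) = (k : ℝ) := by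
          exact_mod_cast congrArg (Nat.cast : ℕ → ℝ) hmsum
        push_cast at h3 ⊢
        linarith
      · intro j
        show ∃ c : ℤ, (c : ℝ) = ∑ t, (mu t + (m t : ℝ)) * (v t j : ℝ)
        obtain ⟨c, hcspec⟩ := hlat j
        refine ⟨c + ∑ t, (m t : ℤ) * v t j, ?_⟩
        push_cast
        rw [hcspec, ← Finset.sum_add_distrib]
        refine Finset.sum_congr rfl fun t _ => ?_
        ring⟩
  have hbij : Function.Bijective F := by
    constructor
    · rintro ⟨i, ⟨mu, hmu⟩, ⟨m, hm⟩⟩ ⟨i', ⟨mu', hmu'⟩, ⟨m', hm'⟩⟩ hF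
      have heq : ∀ t, mu t + (m t : ℝ) = mu' t + (m' t : ℝ) := by
        intro t
        exact congrFun (congrArg Subtype.val hF) t
      obtain ⟨h1, h2, h3⟩ := decomp_unique (ℓ := (i : ℕ) + 1) (ℓ' := (i' : ℕ) + 1)
        (by omega) hmu.1 hmu.2.1 hmu.2.2.1 hm.1 hmu'.1 hmu'.2.1 hmu'.2.2.1 hm'.1 heq
      have hii : i = i' := Fin.ext (by omega)
      subst hii
      subst h2
      subst h3
      rfl
    · rintro ⟨lam, hpos, hsum, hlat⟩
      obtain ⟨ℓ, hℓ1, hℓd, mu, m, hmupos, hmusum, hmuat, hmsupp, hlameq⟩ :=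
        decomp_exists hk lam hpos hsum
      have hc : ℓ - 1 + 1 = ℓ := by omega
      have hmuIsLat : IsLat v mu := by
        intro j
        obtain ⟨c, hcspec⟩ := hlat j
        refine ⟨c - ∑ t, (m t : ℤ) * v t j, ?_⟩
        push_cast
        rw [hcspec]
        have : ∑ t, lam t * (v t j : ℝ) =
            ∑ t, mu t * (v t j : ℝ) + ∑ t, (m t : ℝ) * (v t j : ℝ) := by
          rw [← Finset.sum_add_distrib]
          refine Finset.sum_congr rfl fun t _ => ?_
          rw [hlameq t]; ring
        rw [this]; ring
      have hmsum : (∑ t, m t) + ℓ = k := by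
        have h1 : (k : ℝ) = (ℓ : ℝ) + ∑ t, (m t : ℝ) := by
          rw [← hsum, ← hmusum]
          rw [← Finset.sum_add_distrib]
          exact Finset.sum_congr rfl fun t _ => hlameq t
        have h2 : ((∑ t, m t) + ℓ : ℕ) = (k : ℕ) := by
          have : (((∑ t, m t) + ℓ : ℕ) : ℝ) = (k : ℝ) := by push_cast; rw [h1]; ring
          exact_mod_cast this
        exact h2
      refine ⟨⟨⟨ℓ - 1, by omega⟩, ⟨mu, ?_⟩, ⟨m, ?_⟩⟩, ?_⟩
      · show mu ∈ Atom v (ℓ - 1 + 1)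
        rw [hc]
        exact ⟨hmupos, hmusum, hmuat, hmuIsLat⟩
      · show m ∈ Mset d k (ℓ - 1 + 1)
        rw [hc]
        exact ⟨hmsupp, hmsum⟩
      · apply Subtype.ext
        funext t
        exact (hlameq t).symm
  have hcard : Nat.card ↥(Lam v k) =
      Nat.card (Σ i : Fin (d + 1), ↥(Atom v ((i : ℕ) + 1)) × ↥(Mset d k ((i : ℕ) + 1))) :=
    (Nat.card_congr (Equiv.ofBijective F hbij)).symm
  rw [hcard]
  haveI hAfin : ∀ i : Fin (d + 1), Finite ↥(Atom v ((i : ℕ) + 1)) :=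
    fun i => (finite_Atom v hv _).to_subtype
  haveI hMfin : ∀ i : Fin (d + 1), Finite ↥(Mset d k ((i : ℕ) + 1)) :=
    fun i => (finite_Mset d k _ (by omega)).to_subtype
  rw [nat_card_sigma]
  rw [← Fin.sum_univ_eq_sum_range
    (fun i => Nat.card ↥(Atom v (i + 1)) * (k - 1).choose i) (d + 1)]
  refine Finset.sum_congr rfl fun i _ => ?_
  rw [Nat.card_prod]
  congr 1
  rw [card_Mset d k ((i : ℕ) + 1) (by omega) (by omega) hk]
  simp

theorem card_S {d n : ℕ} (v : Fin (d + 1) → Fin n → ℤ)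
    (hv : AffineIndependent ℝ fun i => fun j => ((v i j : ℝ))) (k : ℕ) :
    {x : Fin n → ℤ | ∃ lam : Fin (d + 1) → ℝ,
      (∀ t, 0 < lam t) ∧ (∑ t, lam t) = (k : ℝ) ∧
      ∀ j : Fin n, (x j : ℝ) = ∑ t, lam t * (v t j : ℝ)}.ncard = Nat.card ↥(Lam v k) := by
  classical
  rw [← Nat.card_coe_set_eq]
  set S : Set (Fin n → ℤ) := {x : Fin n → ℤ | ∃ lam : Fin (d + 1) → ℝ,
      (∀ t, 0 < lam t) ∧ (∑ t, lam t) = (k : ℝ) ∧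
      ∀ j : Fin n, (x j : ℝ) = ∑ t, lam t * (v t j : ℝ)} with hS
  set G : ↥(Lam v k) → ↥S := fun lam =>
    ⟨fun j => Classical.choose (lam.2.2.2 j), by
      refine ⟨lam.1, lam.2.1, lam.2.2.1, fun j => ?_⟩
      exact Classical.choose_spec (lam.2.2.2 j)⟩ with hG
  have hbij : Function.Bijective G := by
    constructor
    · rintro ⟨lam, hlam⟩ ⟨lam', hlam'⟩ hGe
      have hxeq : ∀ j, Classical.choose (hlam.2.2 j) = Classical.choose (hlam'.2.2 j) :=
        fun j => congrFun (congrArg Subtype.val hGe) j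
      apply Subtype.ext
      apply lam_unique hv
      · rw [hlam.2.1, hlam'.2.1]
      · intro j
        rw [← Classical.choose_spec (hlam.2.2 j), ← Classical.choose_spec (hlam'.2.2 j), hxeq j]
    · rintro ⟨x, lam, hpos, hsum, hx⟩
      have hlam : lam ∈ Lam v k := ⟨hpos, hsum, fun j => ⟨x j, hx j⟩⟩
      refine ⟨⟨lam, hlam⟩, ?_⟩
      apply Subtype.ext
      funext j
      have hspec := Classical.choose_spec (hlam.2.2 j)
      have : ((Classical.choose (hlam.2.2 j) : ℤ) : ℝ) = ((x j : ℤ) : ℝ) := by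
        rw [hspec, hx j]
      exact_mod_cast this
  exact (Nat.card_congr (Equiv.ofBijective G hbij)).symm

theorem A_empty {d n : ℕ} (v : Fin (d + 1) → Fin n → ℤ) (i : ℕ) (hid : d < i) :
    {z : Fin (n + 1) → ℤ | ∃ lam : Fin (d + 1) → ℝ,
        (∀ t, 0 < lam t) ∧ (∑ t, lam t ≤ (d : ℝ) + 1) ∧
        ⌈∑ t, lam t⌉ = (i : ℤ) + 1 ∧
        (∀ j : Fin (d + 1), ((j : ℕ) + 1 : ℤ) < ⌈∑ t, lam t⌉ → lam j ≤ 1) ∧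
        (∀ j : Fin n, (z (Fin.castSucc j) : ℝ) = ∑ t, lam t * (v t j : ℝ)) ∧
        ((z (Fin.last n) : ℝ) = ∑ t, lam t)} = ∅ := by
  ext z
  simp only [Set.mem_setOf_eq, Set.mem_empty_iff_false, iff_false]
  rintro ⟨lam, hpos, hle, hceil, hat, hz, hzl⟩
  have h1 : ⌈∑ t, lam t⌉ ≤ (d : ℤ) + 1 := by
    rw [Int.ceil_le]
    push_cast
    exact hle
  rw [hceil] at h1
  omega

theorem card_A {d n : ℕ} (v : Fin (d + 1) → Fin n → ℤ)
    (hv : AffineIndependent ℝ fun i => fun j => ((v i j : ℝ))) (i : ℕ) (hid : i ≤ d) :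
    {z : Fin (n + 1) → ℤ | ∃ lam : Fin (d + 1) → ℝ,
        (∀ t, 0 < lam t) ∧ (∑ t, lam t ≤ (d : ℝ) + 1) ∧
        ⌈∑ t, lam t⌉ = (i : ℤ) + 1 ∧
        (∀ j : Fin (d + 1), ((j : ℕ) + 1 : ℤ) < ⌈∑ t, lam t⌉ → lam j ≤ 1) ∧
        (∀ j : Fin n, (z (Fin.castSucc j) : ℝ) = ∑ t, lam t * (v t j : ℝ)) ∧
        ((z (Fin.last n) : ℝ) = ∑ t, lam t)}.ncard = Nat.card ↥(Atom v (i + 1)) := by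
  classical
  rw [← Nat.card_coe_set_eq]
  set A : Set (Fin (n + 1) → ℤ) := {z : Fin (n + 1) → ℤ | ∃ lam : Fin (d + 1) → ℝ,
        (∀ t, 0 < lam t) ∧ (∑ t, lam t ≤ (d : ℝ) + 1) ∧
        ⌈∑ t, lam t⌉ = (i : ℤ) + 1 ∧
        (∀ j : Fin (d + 1), ((j : ℕ) + 1 : ℤ) < ⌈∑ t, lam t⌉ → lam j ≤ 1) ∧
        (∀ j : Fin n, (z (Fin.castSucc j) : ℝ) = ∑ t, lam t * (v t j : ℝ)) ∧
        ((z (Fin.last n) : ℝ) = ∑ t, lam t)} with hA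
  set G : ↥(Atom v (i + 1)) → ↥A := fun mu =>
    ⟨Fin.snoc (fun j => Classical.choose (mu.2.2.2.2 j)) ((i : ℤ) + 1), by
      obtain ⟨mu, hpos, hsum, hat, hlat⟩ := mu
      refine ⟨mu, hpos, ?_, ?_, ?_, ?_, ?_⟩
      · rw [hsum]
        push_cast
        have : (i : ℝ) ≤ (d : ℝ) := by exact_mod_cast hid
        linarith
      · rw [hsum]
        rw [show ((i + 1 : ℕ) : ℝ) = (((i : ℤ) + 1 : ℤ) : ℝ) by push_cast; ring]
        exact Int.ceil_intCast _
      · intro j hj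
        apply hat
        have h2 : ⌈∑ t, mu t⌉ = (i : ℤ) + 1 := by
          rw [hsum, show ((i + 1 : ℕ) : ℝ) = (((i : ℤ) + 1 : ℤ) : ℝ) by push_cast; ring]
          exact Int.ceil_intCast _
        rw [h2] at hj
        exact_mod_cast by omega
      · intro j
        rw [Fin.snoc_castSucc]
        exact Classical.choose_spec (hlat j)
      · rw [Fin.snoc_last, hsum]
        push_cast
        ring⟩ with hG
  have hbij : Function.Bijective G := by
    constructor
    · rintro ⟨mu, hmu⟩ ⟨mu', hmu'⟩ hGe
      apply Subtype.ext
      apply lam_unique hv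
      · rw [hmu.2.1, hmu'.2.1]
      · intro j
        have hthis := congrFun (congrArg Subtype.val hGe) (Fin.castSucc j)
        simp only [hG, Fin.snoc_castSucc] at hthis
        rw [← Classical.choose_spec (hmu.2.2.2 j), ← Classical.choose_spec (hmu'.2.2.2 j), hthis]
    · rintro ⟨z, lam, hpos, hle, hceil, hat, hz, hzl⟩
      have hzlast : z (Fin.last n) = (i : ℤ) + 1 := by
        have h1 : ⌈∑ t, lam t⌉ = z (Fin.last n) := by
          rw [← hzl]
          exact Int.ceil_intCast _
        omega
      have hsum : ∑ t, lam t = ((i + 1 : ℕ) : ℝ) := by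
        rw [← hzl, hzlast]
        push_cast
        ring
      have hmu : lam ∈ Atom v (i + 1) := by
        refine ⟨hpos, hsum, ?_, fun j => ⟨z (Fin.castSucc j), hz j⟩⟩
        intro j hj
        apply hat
        rw [hceil]
        exact_mod_cast by omega
      refine ⟨⟨lam, hmu⟩, ?_⟩
      apply Subtype.ext
      funext w
      refine Fin.lastCases ?_ ?_ w
      · show (Fin.snoc (fun j => Classical.choose (hmu.2.2.2 j)) ((i : ℤ) + 1) : Fin (n+1) → ℤ)
            (Fin.last n) = z (Fin.last n)
        rw [Fin.snoc_last, hzlast]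
      · intro j
        show (Fin.snoc (fun j => Classical.choose (hmu.2.2.2 j)) ((i : ℤ) + 1) : Fin (n+1) → ℤ)
            (Fin.castSucc j) = z (Fin.castSucc j)
        rw [Fin.snoc_castSucc]
        have hspec := Classical.choose_spec (hmu.2.2.2 j)
        have : ((Classical.choose (hmu.2.2.2 j) : ℤ) : ℝ) = ((z (Fin.castSucc j) : ℤ) : ℝ) := by
          rw [hspec, hz j]
        exact_mod_cast this
  exact (Nat.card_congr (Equiv.ofBijective G hbij)).symm

theorem prod_desc (k : ℕ) (hk : 1 ≤ k) (i : ℕ) :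
    ∏ j ∈ Finset.range i, ((k : ℚ) - ((j : ℚ) + 1)) =
      ((k - 1).choose i : ℚ) * (i.factorial : ℚ) := by
  induction i with
  | zero => simp
  | succ i ih =>
    rw [Finset.prod_range_succ, ih]
    rcases lt_trichotomy i (k - 1) with h | h | h
    · have h1 : (((k - 1) - i : ℕ) : ℚ) = (k : ℚ) - ((i : ℚ) + 1) := by
        have h2 : ((k - 1 : ℕ) : ℚ) = (k : ℚ) - 1 := by
          rw [Nat.cast_sub hk]; push_cast; ring
        rw [Nat.cast_sub (by omega), h2]; ring
      have hcc : ((k - 1).choose (i + 1) : ℚ) * ((i : ℚ) + 1) =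
          ((k - 1).choose i : ℚ) * (((k - 1) - i : ℕ) : ℚ) := by
        exact_mod_cast congrArg (Nat.cast : ℕ → ℚ) (Nat.choose_succ_right_eq (k - 1) i)
      rw [← h1]
      have hfac : ((i + 1).factorial : ℚ) = ((i : ℚ) + 1) * (i.factorial : ℚ) := by
        rw [Nat.factorial_succ]; push_cast; ring
      rw [hfac]
      nlinarith [hcc]
    · have hz : (k : ℚ) - ((i : ℚ) + 1) = 0 := by
        have : k = i + 1 := by omega
        rw [this]; push_cast; ring
      rw [hz, Nat.choose_eq_zero_of_lt (by omega : k - 1 < i + 1)]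
      simp
    · rw [Nat.choose_eq_zero_of_lt (by omega : k - 1 < i),
        Nat.choose_eq_zero_of_lt (by omega : k - 1 < i + 1)]
      simp

theorem binomDesc_eval (i k : ℕ) (hk : 1 ≤ k) :
    (binomDesc i).eval (k : ℚ) = ((k - 1).choose i : ℚ) := by
  have hfac : (i.factorial : ℚ) ≠ 0 := by exact_mod_cast i.factorial_ne_zero
  rw [binomDesc]
  rw [Polynomial.eval_mul, Polynomial.eval_C, Polynomial.eval_prod]
  have : ∀ j ∈ Finset.range i, (X - Polynomial.C ((j : ℚ) + 1)).eval (k : ℚ)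
      = (k : ℚ) - ((j : ℚ) + 1) := by
    intro j _
    simp
  rw [Finset.prod_congr rfl this, prod_desc k hk i]
  field_simp

end FstarAux

/-- Counting interpretation of the `f*`-vector of an open lattice simplex: if `Δ` is the
relative interior of the `d`-dimensional lattice simplex with vertices
`v 0, …, v d ∈ ℤ^n` and `f` is the `f*`-vector of its Ehrhart polynomial with respect to
any `d' ≥ d`, then `f i` is the number of atomic lattice points at level `i + 1` in the
half-open fundamental simplex of the cone over `Δ × {1}`.  (In particular `f i = 0` for
`i > d`.) -/
theorem fstar_counts_atomic_points (d n d' : ℕ) (hd' : d ≤ d')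
    (v : Fin (d + 1) → Fin n → ℤ)
    (hv : AffineIndependent ℝ fun i => fun j => ((v i j : ℝ)))
    (L : ℕ → ℕ)
    (hL : ∀ k : ℕ, L k = Set.ncard {x : Fin n → ℤ | ∃ lam : Fin (d + 1) → ℝ,
      (∀ t, 0 < lam t) ∧ (∑ t, lam t) = (k : ℝ) ∧
      ∀ j : Fin n, (x j : ℝ) = ∑ t, lam t * (v t j : ℝ)})
    (f : ℕ → ℚ)
    (hf : ∀ k : ℕ, 1 ≤ k →
      (L k : ℚ) = ∑ i ∈ Finset.range (d' + 1), f i * (binomDesc i).eval (k : ℚ)) :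
    ∀ i : ℕ, i ≤ d' →
      f i = Set.ncard {z : Fin (n + 1) → ℤ | ∃ lam : Fin (d + 1) → ℝ,
        (∀ t, 0 < lam t) ∧ (∑ t, lam t ≤ (d : ℝ) + 1) ∧
        ⌈∑ t, lam t⌉ = (i : ℤ) + 1 ∧
        (∀ j : Fin (d + 1), ((j : ℕ) + 1 : ℤ) < ⌈∑ t, lam t⌉ → lam j ≤ 1) ∧
        (∀ j : Fin n, (z (Fin.castSucc j) : ℝ) = ∑ t, lam t * (v t j : ℝ)) ∧
        ((z (Fin.last n) : ℝ) = ∑ t, lam t)} := by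
  classical
  set Aset : ℕ → Set (Fin (n + 1) → ℤ) := fun i =>
    {z : Fin (n + 1) → ℤ | ∃ lam : Fin (d + 1) → ℝ,
        (∀ t, 0 < lam t) ∧ (∑ t, lam t ≤ (d : ℝ) + 1) ∧
        ⌈∑ t, lam t⌉ = (i : ℤ) + 1 ∧
        (∀ j : Fin (d + 1), ((j : ℕ) + 1 : ℤ) < ⌈∑ t, lam t⌉ → lam j ≤ 1) ∧
        (∀ j : Fin n, (z (Fin.castSucc j) : ℝ) = ∑ t, lam t * (v t j : ℝ)) ∧
        ((z (Fin.last n) : ℝ) = ∑ t, lam t)} with hAset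
  have hAcard : ∀ i' : ℕ, i' ≤ d →
      (Aset i').ncard = Nat.card ↥(FstarAux.Atom v (i' + 1)) :=
    fun i' h => FstarAux.card_A v hv i' h
  have hAempty : ∀ i' : ℕ, d < i' → Aset i' = ∅ := fun i' h => FstarAux.A_empty v i' h
  have key : ∀ k : ℕ, 1 ≤ k →
      L k = ∑ i' ∈ Finset.range (d' + 1), (Aset i').ncard * (k - 1).choose i' := by
    intro k hk
    rw [hL k, FstarAux.card_S v hv k, FstarAux.card_Lam v hv k hk]
    have e1 : ∑ i' ∈ Finset.range (d + 1), Nat.card ↥(FstarAux.Atom v (i' + 1)) *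
          (k - 1).choose i'
        = ∑ i' ∈ Finset.range (d + 1), (Aset i').ncard * (k - 1).choose i' :=
      Finset.sum_congr rfl fun i' hmem => by
        rw [hAcard i' (by rw [Finset.mem_range] at hmem; omega)]
    rw [e1]
    apply Finset.sum_subset (Finset.range_subset_range.mpr (by omega : d + 1 ≤ d' + 1))
    intro x hx1 hx2
    rw [Finset.mem_range] at hx1 hx2
    rw [hAempty x (by omega)]
    simp
  have keyQ : ∀ k : ℕ, 1 ≤ k →
      ∑ i' ∈ Finset.range (d' + 1), f i' * ((k - 1).choose i' : ℚ)
        = ∑ i' ∈ Finset.range (d' + 1), ((Aset i').ncard : ℚ) * ((k - 1).choose i' : ℚ) := by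
    intro k hk
    have h1 := hf k hk
    have h2 : ∀ i' ∈ Finset.range (d' + 1),
        f i' * (binomDesc i').eval (k : ℚ) = f i' * ((k - 1).choose i' : ℚ) := fun i' _ => by
      rw [FstarAux.binomDesc_eval i' k hk]
    rw [Finset.sum_congr rfl h2] at h1
    rw [← h1, key k hk]
    push_cast
    rfl
  suffices hS : ∀ m : ℕ, m ≤ d' → f m = ((Aset m).ncard : ℚ) by
    intro i hi
    exact hS i hi
  intro m
  induction m using Nat.strong_induction_on with
  | _ m IH =>
    intro hm
    have hk := keyQ (m + 1) (by omega)
    simp only [Nat.add_sub_cancel] at hk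
    have hzero : ∑ i' ∈ Finset.range (d' + 1),
        (f i' - ((Aset i').ncard : ℚ)) * (m.choose i' : ℚ) = 0 := by
      have hexp : ∀ i' ∈ Finset.range (d' + 1),
          (f i' - ((Aset i').ncard : ℚ)) * (m.choose i' : ℚ)
            = f i' * (m.choose i' : ℚ) - ((Aset i').ncard : ℚ) * (m.choose i' : ℚ) :=
        fun i' _ => by ring
      rw [Finset.sum_congr rfl hexp, Finset.sum_sub_distrib, hk, sub_self]
    have h0 : ∀ b ∈ Finset.range (d' + 1), b ≠ m →
        (f b - ((Aset b).ncard : ℚ)) * (m.choose b : ℚ) = 0 := by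
      intro b hb hbm
      rcases lt_or_gt_of_ne hbm with hlt | hgt
      · rw [IH b hlt (by rw [Finset.mem_range] at hb; omega)]
        ring
      · rw [Nat.choose_eq_zero_of_lt hgt]
        simp
    have h1 : m ∉ Finset.range (d' + 1) →
        (f m - ((Aset m).ncard : ℚ)) * (m.choose m : ℚ) = 0 := fun hmn =>
      absurd (Finset.mem_range.mpr (by omega)) hmn
    have h2 := (Finset.sum_eq_single m h0 h1).symm.trans hzero
    rw [Nat.choose_self] at h2
    push_cast at h2
    linarith
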